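/- Suppose F = α + a + *b + *β is a C¹ multivector field on an open Ω ⊆ ℝ³ satisfying DF = ikF with k ∈ ℂ. Then (∇α = ika and ∇β = ikb) if and only if dF = ik T⁻F, where T⁻F = ½(F − F̂) is the odd-grade part. Moreover, in this case F₁ = α + a satisfies DF₁ = ikF₁ and F₂ = *b + *β satisfies DF₂ = ikF₂. -/

import Mathlib

noncomputable section

/-- Complex Euclidean dot product (bilinear extension) on `ℂ³`. -/
def cdot (u v : Fin 3 → ℂ) : ℂ := u 0 * v 0 + u 1 * v 1 + u 2 * v 2

/-- Bilinear extension of the cross product to `ℂ³`. -/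
def ccross (u v : Fin 3 → ℂ) : Fin 3 → ℂ :=
  ![u 1 * v 2 - u 2 * v 1, u 2 * v 0 - u 0 * v 2, u 0 * v 1 - u 1 * v 0]

/-- The eight-dimensional complex Clifford algebra `Cl(ℂ³)` of `ℝ³`, identified
as a linear space with `∧ℂ³`: a multivector is `w = α + a + *b + *β` with
scalar part `α`, vector part `a`, bivector part `*b` and 3-vector part `*β`. -/
structure Cl3 where
  α : ℂ
  a : Fin 3 → ℂ
  b : Fin 3 → ℂ
  β : ℂ

instance : Zero Cl3 := ⟨⟨0, 0, 0, 0⟩⟩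
instance : One Cl3 := ⟨⟨1, 0, 0, 0⟩⟩
instance : Add Cl3 := ⟨fun x y => ⟨x.α + y.α, x.a + y.a, x.b + y.b, x.β + y.β⟩⟩
instance : Neg Cl3 := ⟨fun x => ⟨-x.α, -x.a, -x.b, -x.β⟩⟩
instance : Sub Cl3 := ⟨fun x y => x + -y⟩
instance : SMul ℂ Cl3 := ⟨fun c x => ⟨c * x.α, c • x.a, c • x.b, c * x.β⟩⟩

/-- The Clifford product on `∧ℂ³`, with the convention `u u = |u|²` for
vectors `u`.  It is determined by the product of a vector with a multivector,
`u w = u·a + (uα − u×b) + *(u×a + uβ) + *(u·b)` for `w = α + a + *b + *β`. -/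
instance : Mul Cl3 := ⟨fun x y =>
  ⟨x.α * y.α + cdot x.a y.a - cdot x.b y.b - x.β * y.β,
   x.α • y.a + y.α • x.a - ccross x.a y.b - ccross x.b y.a - y.β • x.b - x.β • y.b,
   x.α • y.b + y.α • x.b + ccross x.a y.a - ccross x.b y.b + x.β • y.a + y.β • x.a,
   x.α * y.β + x.β * y.α + cdot x.a y.b + cdot x.b y.a⟩⟩

/-- The embedding of real vectors `ℝ³ ⊂ Cl(ℂ³)`. -/
def vec (u : Fin 3 → ℝ) : Cl3 := ⟨0, fun i => (u i : ℂ), 0, 0⟩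

/-- The grade involution `ŵ`: negation of the vector (degree-1) and 3-vector
(degree-3) parts. -/
def gradeInv (w : Cl3) : Cl3 := ⟨w.α, -w.a, w.b, -w.β⟩

/-- Exterior product of a complex vector with a multivector:
`u ∧ w = uα + *(u×a) + *(u·b)` for `w = α + a + *b + *β`. -/
def wedgeC (u : Fin 3 → ℂ) (w : Cl3) : Cl3 := ⟨0, w.α • u, ccross u w.a, cdot u w.b⟩

/-- Exterior product of a real vector with a multivector. -/
def wedgeVec (u : Fin 3 → ℝ) (w : Cl3) : Cl3 := wedgeC (fun i => (u i : ℂ)) w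

/-- Partial derivative `∂ᵢ f` of a complex-valued function on `ℝ³`. -/
def pdC (i : Fin 3) (f : (Fin 3 → ℝ) → ℂ) (x : Fin 3 → ℝ) : ℂ :=
  fderiv ℝ f x (Pi.single i 1)

/-- Componentwise partial derivative `∂ᵢ F` of a multivector field. -/
def pdCl (i : Fin 3) (F : (Fin 3 → ℝ) → Cl3) (x : Fin 3 → ℝ) : Cl3 :=
  ⟨pdC i (fun y => (F y).α) x, fun j => pdC i (fun y => (F y).a j) x,
   fun j => pdC i (fun y => (F y).b j) x, pdC i (fun y => (F y).β) x⟩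

/-- The standard basis vector `eᵢ` of `ℝ³`. -/
def basisVec (i : Fin 3) : Fin 3 → ℝ := Pi.single i 1

/-- The Hodge–Dirac operator `D F = e₁ ∂₁F + e₂ ∂₂F + e₃ ∂₃F`, the nabla
symbol acting via the Clifford product. -/
def Dirac (F : (Fin 3 → ℝ) → Cl3) (x : Fin 3 → ℝ) : Cl3 :=
  vec (basisVec 0) * pdCl 0 F x + vec (basisVec 1) * pdCl 1 F x
    + vec (basisVec 2) * pdCl 2 F x

/-- The exterior derivative `d F = e₁ ∧ ∂₁F + e₂ ∧ ∂₂F + e₃ ∧ ∂₃F`, the nabla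
symbol acting via the exterior product. -/
def extDerivCl (F : (Fin 3 → ℝ) → Cl3) (x : Fin 3 → ℝ) : Cl3 :=
  wedgeVec (basisVec 0) (pdCl 0 F x) + wedgeVec (basisVec 1) (pdCl 1 F x)
    + wedgeVec (basisVec 2) (pdCl 2 F x)

/-- Divergence `∇·v` of a complex vector field on `ℝ³`. -/
def divC (v : (Fin 3 → ℝ) → Fin 3 → ℂ) (x : Fin 3 → ℝ) : ℂ :=
  pdC 0 (fun y => v y 0) x + pdC 1 (fun y => v y 1) x + pdC 2 (fun y => v y 2) x

/-- Curl `∇×v` of a complex vector field on `ℝ³`. -/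
def curlC (v : (Fin 3 → ℝ) → Fin 3 → ℂ) (x : Fin 3 → ℝ) : Fin 3 → ℂ :=
  ![pdC 1 (fun y => v y 2) x - pdC 2 (fun y => v y 1) x,
    pdC 2 (fun y => v y 0) x - pdC 0 (fun y => v y 2) x,
    pdC 0 (fun y => v y 1) x - pdC 1 (fun y => v y 0) x]

/-- Gradient `∇f` of a complex-valued function on `ℝ³`. -/
def gradC (f : (Fin 3 → ℝ) → ℂ) (x : Fin 3 → ℝ) : Fin 3 → ℂ :=
  fun i => pdC i f x

@[simp] lemma Cl3.smul_α (c : ℂ) (w : Cl3) : (c • w).α = c * w.α := rfl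
@[simp] lemma Cl3.smul_a (c : ℂ) (w : Cl3) (j : Fin 3) : (c • w).a j = c * w.a j := rfl
@[simp] lemma Cl3.smul_b (c : ℂ) (w : Cl3) (j : Fin 3) : (c • w).b j = c * w.b j := rfl
@[simp] lemma Cl3.smul_β (c : ℂ) (w : Cl3) : (c • w).β = c * w.β := rfl
@[simp] lemma Cl3.add_α (v w : Cl3) : (v + w).α = v.α + w.α := rfl
@[simp] lemma Cl3.add_a (v w : Cl3) (j : Fin 3) : (v + w).a j = v.a j + w.a j := rfl
@[simp] lemma Cl3.add_b (v w : Cl3) (j : Fin 3) : (v + w).b j = v.b j + w.b j := rfl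
@[simp] lemma Cl3.add_β (v w : Cl3) : (v + w).β = v.β + w.β := rfl
@[simp] lemma Cl3.sub_α (v w : Cl3) : (v - w).α = v.α - w.α := by
  show v.α + -w.α = _ ; ring
@[simp] lemma Cl3.sub_a (v w : Cl3) (j : Fin 3) : (v - w).a j = v.a j - w.a j := by
  show v.a j + -w.a j = _ ; ring
@[simp] lemma Cl3.sub_b (v w : Cl3) (j : Fin 3) : (v - w).b j = v.b j - w.b j := by
  show v.b j + -w.b j = _ ; ring
@[simp] lemma Cl3.sub_β (v w : Cl3) : (v - w).β = v.β - w.β := by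
  show v.β + -w.β = _ ; ring
lemma Cl3.mul_α (v w : Cl3) :
    (v * w).α = v.α * w.α + cdot v.a w.a - cdot v.b w.b - v.β * w.β := rfl
lemma Cl3.mul_a (v w : Cl3) (j : Fin 3) :
    (v * w).a j = (v.α • w.a + w.α • v.a - ccross v.a w.b - ccross v.b w.a
      - w.β • v.b - v.β • w.b) j := rfl
lemma Cl3.mul_b (v w : Cl3) (j : Fin 3) :
    (v * w).b j = (v.α • w.b + w.α • v.b + ccross v.a w.a - ccross v.b w.b
      + v.β • w.a + w.β • v.a) j := rfl
lemma Cl3.mul_β (v w : Cl3) :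
    (v * w).β = v.α * w.β + v.β * w.α + cdot v.a w.b + cdot v.b w.a := rfl

lemma Cl3.eq_iff (x y : Cl3) : x = y ↔ x.α = y.α ∧ (x.a 0 = y.a 0 ∧ x.a 1 = y.a 1 ∧ x.a 2 = y.a 2) ∧
    (x.b 0 = y.b 0 ∧ x.b 1 = y.b 1 ∧ x.b 2 = y.b 2) ∧ x.β = y.β := by
  constructor
  · rintro rfl; tauto
  · obtain ⟨xα, xa, xb, xβ⟩ := x
    obtain ⟨yα, ya, yb, yβ⟩ := y
    rintro ⟨h1, ⟨h2, h3, h4⟩, ⟨h5, h6, h7⟩, h8⟩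
    simp only [Cl3.mk.injEq]
    refine ⟨h1, funext fun j => ?_, funext fun j => ?_, h8⟩ <;> fin_cases j <;> assumption

lemma dirac_eq (F : (Fin 3 → ℝ) → Cl3) (x : Fin 3 → ℝ) :
    Dirac F x = ⟨divC (fun y => (F y).a) x,
      fun j => gradC (fun y => (F y).α) x j - curlC (fun y => (F y).b) x j,
      fun j => curlC (fun y => (F y).a) x j + gradC (fun y => (F y).β) x j,
      divC (fun y => (F y).b) x⟩ := by
  rw [Cl3.eq_iff]
  refine ⟨?_, ⟨?_, ?_, ?_⟩, ⟨?_, ?_, ?_⟩, ?_⟩ <;>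
    simp [Dirac, vec, basisVec, pdCl, Cl3.mul_α, Cl3.mul_a, Cl3.mul_b, Cl3.mul_β,
      cdot, ccross, divC, curlC, gradC, Pi.single_apply, Pi.smul_apply, smul_eq_mul,
      Matrix.vecHead, Matrix.vecTail] <;> ring

lemma extDeriv_eq (F : (Fin 3 → ℝ) → Cl3) (x : Fin 3 → ℝ) :
    extDerivCl F x = ⟨0, fun j => gradC (fun y => (F y).α) x j,
      fun j => curlC (fun y => (F y).a) x j, divC (fun y => (F y).b) x⟩ := by
  rw [Cl3.eq_iff]
  refine ⟨?_, ⟨?_, ?_, ?_⟩, ⟨?_, ?_, ?_⟩, ?_⟩ <;>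
    simp [extDerivCl, wedgeVec, wedgeC, basisVec, pdCl, cdot, ccross,
      divC, curlC, gradC, Pi.single_apply] <;> ring
lemma fin3_funext_iff (f g : Fin 3 → ℂ) : f = g ↔ f 0 = g 0 ∧ f 1 = g 1 ∧ f 2 = g 2 := by
  constructor
  · rintro rfl; tauto
  · rintro ⟨h0, h1, h2⟩; funext j; fin_cases j <;> assumption

lemma key_iff (k : ℂ) (F : (Fin 3 → ℝ) → Cl3)
    (x : Fin 3 → ℝ) (hd : Dirac F x = (Complex.I * k) • F x) :
    ((gradC (fun y => (F y).α) x = (Complex.I * k) • (F x).a ∧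
        gradC (fun y => (F y).β) x = (Complex.I * k) • (F x).b) ↔
      (extDerivCl F x = (Complex.I * k) • ((1 / 2 : ℂ) • (F x - gradeInv (F x))))) := by
  rw [dirac_eq, Cl3.eq_iff] at hd
  simp only [Cl3.smul_α, Cl3.smul_a, Cl3.smul_b, Cl3.smul_β, curlC, gradC, divC,
    Matrix.cons_val_zero, Matrix.cons_val_one, Matrix.head_cons, Matrix.cons_val_two,
    Matrix.tail_cons] at hd
  rw [extDeriv_eq, Cl3.eq_iff, fin3_funext_iff, fin3_funext_iff]
  simp only [Cl3.smul_α, Cl3.smul_a, Cl3.smul_b, Cl3.smul_β, Cl3.sub_α, Cl3.sub_a, Cl3.sub_b,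
    Cl3.sub_β, gradeInv, curlC, gradC, divC, Pi.smul_apply, smul_eq_mul,
    Matrix.cons_val_zero, Matrix.cons_val_one, Matrix.head_cons, Matrix.cons_val_two,
    Matrix.tail_cons]
  simp only [Pi.neg_apply]
  obtain ⟨h1, ⟨h2, h3, h4⟩, ⟨h5, h6, h7⟩, h8⟩ := hd
  constructor
  · rintro ⟨⟨g1, g2, g3⟩, p1, p2, p3⟩
    refine ⟨by ring, ⟨by linear_combination g1, by linear_combination g2,
      by linear_combination g3⟩, ⟨by linear_combination h5 - p1, by linear_combination h6 - p2,
      by linear_combination h7 - p3⟩, by linear_combination h8⟩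
  · rintro ⟨-, ⟨g1, g2, g3⟩, ⟨c1, c2, c3⟩, -⟩
    exact ⟨⟨by linear_combination g1, by linear_combination g2, by linear_combination g3⟩,
      by linear_combination h5 - c1, by linear_combination h6 - c2, by linear_combination h7 - c3⟩


@[simp] lemma pdC_zero (i : Fin 3) (x : Fin 3 → ℝ) : pdC i (fun _ => (0 : ℂ)) x = 0 := by
  simp [pdC]

lemma key_part1 (k : ℂ) (F : (Fin 3 → ℝ) → Cl3) (x : Fin 3 → ℝ)
    (hd : Dirac F x = (Complex.I * k) • F x)
    (hg1 : gradC (fun y => (F y).α) x = (Complex.I * k) • (F x).a)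
    (hg2 : gradC (fun y => (F y).β) x = (Complex.I * k) • (F x).b) :
    Dirac (fun y => (⟨(F y).α, (F y).a, 0, 0⟩ : Cl3)) x
      = (Complex.I * k) • (⟨(F x).α, (F x).a, 0, 0⟩ : Cl3) := by
  rw [dirac_eq, Cl3.eq_iff] at hd
  simp only [Cl3.smul_α, Cl3.smul_a, Cl3.smul_b, Cl3.smul_β, curlC, gradC, divC,
    Matrix.cons_val_zero, Matrix.cons_val_one, Matrix.head_cons, Matrix.cons_val_two,
    Matrix.tail_cons] at hd
  rw [fin3_funext_iff] at hg1 hg2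
  simp only [gradC, Pi.smul_apply, smul_eq_mul] at hg1 hg2
  obtain ⟨h1, ⟨h2, h3, h4⟩, ⟨h5, h6, h7⟩, h8⟩ := hd
  obtain ⟨g1, g2, g3⟩ := hg1
  obtain ⟨p1, p2, p3⟩ := hg2
  rw [dirac_eq, Cl3.eq_iff]
  simp only [Cl3.smul_α, Cl3.smul_a, Cl3.smul_b, Cl3.smul_β, curlC, gradC, divC,
    Matrix.cons_val_zero, Matrix.cons_val_one, Matrix.head_cons, Matrix.cons_val_two,
    Matrix.tail_cons, Pi.zero_apply, pdC_zero, mul_zero]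
  refine ⟨by linear_combination h1, ⟨by linear_combination g1, by linear_combination g2,
    by linear_combination g3⟩, ⟨by linear_combination h5 - p1, by linear_combination h6 - p2,
    by linear_combination h7 - p3⟩, by ring⟩

lemma key_part2 (k : ℂ) (F : (Fin 3 → ℝ) → Cl3) (x : Fin 3 → ℝ)
    (hd : Dirac F x = (Complex.I * k) • F x)
    (hg1 : gradC (fun y => (F y).α) x = (Complex.I * k) • (F x).a)
    (hg2 : gradC (fun y => (F y).β) x = (Complex.I * k) • (F x).b) :
    Dirac (fun y => (⟨0, 0, (F y).b, (F y).β⟩ : Cl3)) x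
      = (Complex.I * k) • (⟨0, 0, (F x).b, (F x).β⟩ : Cl3) := by
  rw [dirac_eq, Cl3.eq_iff] at hd
  simp only [Cl3.smul_α, Cl3.smul_a, Cl3.smul_b, Cl3.smul_β, curlC, gradC, divC,
    Matrix.cons_val_zero, Matrix.cons_val_one, Matrix.head_cons, Matrix.cons_val_two,
    Matrix.tail_cons] at hd
  rw [fin3_funext_iff] at hg1 hg2
  simp only [gradC, Pi.smul_apply, smul_eq_mul] at hg1 hg2
  obtain ⟨h1, ⟨h2, h3, h4⟩, ⟨h5, h6, h7⟩, h8⟩ := hd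
  obtain ⟨g1, g2, g3⟩ := hg1
  obtain ⟨p1, p2, p3⟩ := hg2
  rw [dirac_eq, Cl3.eq_iff]
  simp only [Cl3.smul_α, Cl3.smul_a, Cl3.smul_b, Cl3.smul_β, curlC, gradC, divC,
    Matrix.cons_val_zero, Matrix.cons_val_one, Matrix.head_cons, Matrix.cons_val_two,
    Matrix.tail_cons, Pi.zero_apply, pdC_zero, mul_zero]
  refine ⟨by ring, ⟨by linear_combination h2 - g1, by linear_combination h3 - g2,
    by linear_combination h4 - g3⟩, ⟨by linear_combination p1, by linear_combination p2,
    by linear_combination p3⟩, by linear_combination h8⟩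


/-- Let `F = α + a + *b + *β` be a `C¹` multivector field on an open
`Ω ⊆ ℝ³` satisfying `D F = ik F`. Then `∇α = ika` and `∇β = ikb` on `Ω` if
and only if `d F = ik T⁻F` on `Ω`, where `T⁻F = ½(F − F̂)` is the odd-grade
part. Moreover, in this case `F₁ = α + a` and `F₂ = *b + *β` both satisfy
the Dirac equation `D Fᵢ = ik Fᵢ` on `Ω`. -/
theorem helmholtz_constraint (Ω : Set (Fin 3 → ℝ)) (hΩ : IsOpen Ω)
    (k : ℂ) (F : (Fin 3 → ℝ) → Cl3)
    (hreg : ∀ x ∈ Ω, DifferentiableAt ℝ (fun y => (F y).α) x ∧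
        (∀ j, DifferentiableAt ℝ (fun y => (F y).a j) x) ∧
        (∀ j, DifferentiableAt ℝ (fun y => (F y).b j) x) ∧
        DifferentiableAt ℝ (fun y => (F y).β) x)
    (hdirac : ∀ x ∈ Ω, Dirac F x = (Complex.I * k) • F x) :
    ((∀ x ∈ Ω, gradC (fun y => (F y).α) x = (Complex.I * k) • (F x).a ∧
        gradC (fun y => (F y).β) x = (Complex.I * k) • (F x).b) ↔
      (∀ x ∈ Ω, extDerivCl F x
        = (Complex.I * k) • ((1 / 2 : ℂ) • (F x - gradeInv (F x))))) ∧
    ((∀ x ∈ Ω, gradC (fun y => (F y).α) x = (Complex.I * k) • (F x).a ∧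
        gradC (fun y => (F y).β) x = (Complex.I * k) • (F x).b) →
      (∀ x ∈ Ω, Dirac (fun y => (⟨(F y).α, (F y).a, 0, 0⟩ : Cl3)) x
          = (Complex.I * k) • (⟨(F x).α, (F x).a, 0, 0⟩ : Cl3)) ∧
      (∀ x ∈ Ω, Dirac (fun y => (⟨0, 0, (F y).b, (F y).β⟩ : Cl3)) x
          = (Complex.I * k) • (⟨0, 0, (F x).b, (F x).β⟩ : Cl3))) := by
  refine ⟨forall₂_congr fun x hx => key_iff k F x (hdirac x hx), fun hg =>
    ⟨fun x hx => key_part1 k F x (hdirac x hx) (hg x hx).1 (hg x hx).2,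
     fun x hx => key_part2 k F x (hdirac x hx) (hg x hx).1 (hg x hx).2⟩⟩
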